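/- Let K be a bounded idempotent operator on a Hilbert space H (K² = K) with range R, let σ be a bounded operator with 0 ≤ σ ≤ I such that I − σK is invertible, and set K^σ = √(1−σ) K (I − σK)^{−1} √(1−σ). Then for every f ∈ R, K^σ(√(1−σ) f) = √(1−σ) f; that is, √(1−σ)·R is contained in the range of the projection K^σ, and the fixed points include all √(1−σ)f with f in the range of K. -/

import Mathlib

/-- Let `K` be a bounded idempotent operator on a complex Hilbert space `H`, `σ` a
positive operator with `0 ≤ σ ≤ I`, `s` the positive square root of `1 - σ`, and
suppose `1 - σK` is invertible with inverse `T`.  Set `K^σ = s K (1 - σK)⁻¹ s`.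
Then every element `f` of the range of `K` (equivalently, every fixed point of the
idempotent `K`) satisfies `K^σ (s f) = s f`; that is, `s · range K` consists of
fixed points of the projection `K^σ`. -/
theorem deformed_projection_fixes_range
    {H : Type*} [NormedAddCommGroup H] [InnerProductSpace ℂ H] [CompleteSpace H]
    (K σ s T : H →L[ℂ] H)
    (hK : K * K = K)
    (hσpos : σ.IsPositive) (hσle : (1 - σ).IsPositive)
    (hs : s.IsPositive) (hssq : s * s = 1 - σ)
    (hT : (1 - σ * K) * T = 1) (hT' : T * (1 - σ * K) = 1) :
    ∀ f : H, f ∈ LinearMap.range (K : H →ₗ[ℂ] H) → (s * K * T * s) (s f) = s f := by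
  rintro f ⟨g, rfl⟩
  set f := K g with hf
  have hKf : K f = f := by
    rw [hf, ← ContinuousLinearMap.comp_apply, ← ContinuousLinearMap.mul_def, hK]
  have h1 : (1 - σ * K) f = s (s f) := by
    simp [ContinuousLinearMap.sub_apply, ContinuousLinearMap.mul_apply, hKf,
      ← ContinuousLinearMap.mul_apply s s, hssq, ContinuousLinearMap.sub_apply]
  have h2 : T (s (s f)) = f := by
    rw [← h1, ← ContinuousLinearMap.mul_apply, hT', ContinuousLinearMap.one_apply]
  calc (s * K * T * s) (s f) = s (K (T (s (s f)))) := rfl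
    _ = s f := by rw [h2, hKf]
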